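/- Consider horse races with memory effects and side information: let Y (horses) and X (signals) be finite sets and P(x^n, y^n) a joint probability distribution on X^n × Y^n with all values strictly positive. For each race i let f_i(y_i | y^{i−1}, x^i) > 0 be betting fractions with Σ_{y_i ∈ Y} f_i(y_i | y^{i−1}, x^i) = 1, and let o_i(y_i | y^{i−1}) > 0 be the odds. Define the growth rate g_n = (1/n) Σ_{i=1}^n ln[f_i(y_i | y^{i−1}, x^i)·o_i(y_i | y^{i−1})]. Then ⟨exp[n·g_n − ln P(y^n) − i_{x^n→y^n} − ln o(y^n)]⟩_{(x^n,y^n)∼P} = 1, where o(y^n) = ∏_i o_i(y_i | y^{i−1}) and i_{x^n→y^n} = ln(P(y^n‖x^n)/P(y^n)) with P(y^n‖x^n) = ∏_i P(y_i | y^{i−1}, x^i). -/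

import Mathlib

/-- The causally conditioned factor `P(y_i | y^{i-1}, x^i)` of the joint distribution
`P(x^n, y^n)`, evaluated at the pair of sequences `(x, y)`. -/
noncomputable def condY {X Y : Type*} [Fintype X] [Fintype Y] [DecidableEq X]
    [DecidableEq Y] (n : ℕ)
    (P : (Fin n → X) → (Fin n → Y) → ℝ) (i : Fin n)
    (x : Fin n → X) (y : Fin n → Y) : ℝ :=
  (∑ x' : Fin n → X, ∑ y' : Fin n → Y,
      if (∀ j, j ≤ i → x' j = x j) ∧ (∀ j, j ≤ i → y' j = y j) then P x' y' else 0) /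
  (∑ x' : Fin n → X, ∑ y' : Fin n → Y,
      if (∀ j, j ≤ i → x' j = x j) ∧ (∀ j, j < i → y' j = y j) then P x' y' else 0)

set_option linter.unusedSectionVars false
set_option linter.unusedVariables false

section marginals
variable {X Y : Type*} [Fintype X] [Fintype Y] [DecidableEq X] [DecidableEq Y]

noncomputable def Amar (n : ℕ) (P : (Fin n → X) → (Fin n → Y) → ℝ) (k : ℕ)
    (x : Fin n → X) (y : Fin n → Y) : ℝ :=
  ∑ x' : Fin n → X, ∑ y' : Fin n → Y,
    if (∀ j : Fin n, j.val < k → x' j = x j) ∧ (∀ j : Fin n, j.val < k → y' j = y j)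
    then P x' y' else 0

noncomputable def Bmar (n : ℕ) (P : (Fin n → X) → (Fin n → Y) → ℝ) (i : Fin n)
    (x : Fin n → X) (y : Fin n → Y) : ℝ :=
  ∑ x' : Fin n → X, ∑ y' : Fin n → Y,
    if (∀ j, j ≤ i → x' j = x j) ∧ (∀ j, j < i → y' j = y j) then P x' y' else 0

lemma sum_if_pos {n : ℕ} (P : (Fin n → X) → (Fin n → Y) → ℝ)
    (hP : ∀ x y, 0 < P x y) (Q : (Fin n → X) → (Fin n → Y) → Prop)
    [∀ x y, Decidable (Q x y)] (x : Fin n → X) (y : Fin n → Y) (hQ : Q x y) :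
    0 < ∑ x' : Fin n → X, ∑ y' : Fin n → Y, if Q x' y' then P x' y' else 0 := by
  apply Finset.sum_pos'
  · intro x' _
    apply Finset.sum_nonneg
    intro y' _
    by_cases h : Q x' y' <;> simp [h, (hP x' y').le]
  · refine ⟨x, Finset.mem_univ x, Finset.sum_pos' ?_ ⟨y, Finset.mem_univ y, ?_⟩⟩
    · intro y' _
      by_cases h : Q x y' <;> simp [h, (hP x y').le]
    · simp [hQ, hP x y]

lemma Amar_pos {n : ℕ} (P : (Fin n → X) → (Fin n → Y) → ℝ)
    (hP : ∀ x y, 0 < P x y) (k : ℕ) (x : Fin n → X) (y : Fin n → Y) :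
    0 < Amar n P k x y :=
  sum_if_pos P hP _ x y ⟨fun _ _ => rfl, fun _ _ => rfl⟩

lemma Bmar_pos {n : ℕ} (P : (Fin n → X) → (Fin n → Y) → ℝ)
    (hP : ∀ x y, 0 < P x y) (i : Fin n) (x : Fin n → X) (y : Fin n → Y) :
    0 < Bmar n P i x y :=
  sum_if_pos P hP _ x y ⟨fun _ _ => rfl, fun _ _ => rfl⟩

lemma condY_eq {n : ℕ} (P : (Fin n → X) → (Fin n → Y) → ℝ) (i : Fin n)
    (x : Fin n → X) (y : Fin n → Y) :
    condY n P i x y = Amar n P (i.val + 1) x y / Bmar n P i x y := by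
  unfold condY Amar Bmar
  congr 1
  refine Finset.sum_congr rfl fun x' _ => Finset.sum_congr rfl fun y' _ => ?_
  refine if_congr (and_congr ?_ ?_) rfl rfl <;>
    exact forall_congr' fun j => imp_congr_left (by rw [Fin.le_def, Nat.lt_succ_iff])

lemma Amar_zero {n : ℕ} (P : (Fin n → X) → (Fin n → Y) → ℝ)
    (x : Fin n → X) (y : Fin n → Y) :
    Amar n P 0 x y = ∑ x', ∑ y', P x' y' := by
  unfold Amar
  simp

lemma Amar_top {n : ℕ} (P : (Fin n → X) → (Fin n → Y) → ℝ)
    (x : Fin n → X) (y : Fin n → Y) :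
    Amar n P n x y = P x y := by
  unfold Amar
  have h : ∀ (x' : Fin n → X) (y' : Fin n → Y),
      ((∀ j : Fin n, j.val < n → x' j = x j) ∧ (∀ j : Fin n, j.val < n → y' j = y j))
      ↔ (x' = x ∧ y' = y) := by
    intro x' y'
    constructor
    · rintro ⟨h1, h2⟩
      exact ⟨funext fun j => h1 j j.isLt, funext fun j => h2 j j.isLt⟩
    · rintro ⟨rfl, rfl⟩
      exact ⟨fun _ _ => rfl, fun _ _ => rfl⟩
  rw [Finset.sum_congr rfl fun x' _ => Finset.sum_congr rfl fun y' _ =>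
    if_congr (h x' y') rfl rfl]
  simp [ite_and, Finset.sum_ite_eq']

lemma Amar_update {n : ℕ} (P : (Fin n → X) → (Fin n → Y) → ℝ) {k : ℕ} {m : Fin n}
    (hk : k ≤ m.val) (x : Fin n → X) (a : X) (y : Fin n → Y) (b : Y) :
    Amar n P k (Function.update x m a) (Function.update y m b) = Amar n P k x y := by
  unfold Amar
  refine Finset.sum_congr rfl fun x' _ => Finset.sum_congr rfl fun y' _ => ?_
  have hne : ∀ j : Fin n, j.val < k → j ≠ m := by
    intro j hj h
    subst h
    omega
  refine if_congr (and_congr ?_ ?_) rfl rfl <;>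
    exact forall_congr' fun j => imp_congr_right fun hj => by
      rw [Function.update_of_ne (hne j hj)]

lemma Bmar_update {n : ℕ} (P : (Fin n → X) → (Fin n → Y) → ℝ) {i m : Fin n}
    (him : i < m) (x : Fin n → X) (a : X) (y : Fin n → Y) (b : Y) :
    Bmar n P i (Function.update x m a) (Function.update y m b) = Bmar n P i x y := by
  unfold Bmar
  refine Finset.sum_congr rfl fun x' _ => Finset.sum_congr rfl fun y' _ => ?_
  refine if_congr (and_congr ?_ ?_) rfl rfl
  · exact forall_congr' fun j => imp_congr_right fun hj => by
      rw [Function.update_of_ne (ne_of_lt (lt_of_le_of_lt hj him))]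
  · exact forall_congr' fun j => imp_congr_right fun hj => by
      rw [Function.update_of_ne (ne_of_lt (lt_trans hj him))]

lemma Bmar_update_y {n : ℕ} (P : (Fin n → X) → (Fin n → Y) → ℝ) (i : Fin n)
    (x : Fin n → X) (y : Fin n → Y) (b : Y) :
    Bmar n P i x (Function.update y i b) = Bmar n P i x y := by
  unfold Bmar
  refine Finset.sum_congr rfl fun x' _ => Finset.sum_congr rfl fun y' _ => ?_
  refine if_congr (and_congr Iff.rfl ?_) rfl rfl
  exact forall_congr' fun j => imp_congr_right fun hj => by
    rw [Function.update_of_ne (ne_of_lt hj)]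

lemma sum_Bmar {n : ℕ} (P : (Fin n → X) → (Fin n → Y) → ℝ) (m : Fin n)
    (x : Fin n → X) (y : Fin n → Y) :
    ∑ a : X, Bmar n P m (Function.update x m a) y = Amar n P m.val x y := by
  unfold Bmar Amar
  rw [Finset.sum_comm]
  refine Finset.sum_congr rfl fun x' _ => ?_
  rw [Finset.sum_comm]
  refine Finset.sum_congr rfl fun y' _ => ?_
  have hcond : ∀ a : X,
      ((∀ j, j ≤ m → x' j = Function.update x m a j) ∧ (∀ j, j < m → y' j = y j))
      ↔ (x' m = a ∧ ((∀ j : Fin n, j.val < m.val → x' j = x j)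
          ∧ (∀ j : Fin n, j.val < m.val → y' j = y j))) := by
    intro a
    constructor
    · rintro ⟨h1, h2⟩
      refine ⟨by simpa using h1 m le_rfl, fun j hj => ?_, fun j hj => ?_⟩
      · have := h1 j (le_of_lt hj)
        rwa [Function.update_of_ne (Fin.ne_of_lt hj)] at this
      · exact h2 j hj
    · rintro ⟨hm, h1, h2⟩
      refine ⟨fun j hj => ?_, fun j hj => h2 j hj⟩
      rcases lt_or_eq_of_le hj with h | h
      · rw [Function.update_of_ne (Fin.ne_of_lt h)]
        exact h1 j h
      · subst h
        simpa using hm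
  rw [Finset.sum_congr rfl fun a _ => if_congr (hcond a) rfl rfl]
  simp only [ite_and]
  rw [Finset.sum_ite_eq]
  simp

end marginals


lemma sum_update_eq {α β : Type*} [Fintype α] [Fintype β] [DecidableEq α]
    (F : (α → β) → ℝ) (m : α) :
    ∑ x : α → β, ∑ a : β, F (Function.update x m a)
      = (Fintype.card β : ℝ) * ∑ x, F x := by
  classical
  have hinv : Function.Involutive
      (fun p : (α → β) × β => (Function.update p.1 m p.2, p.1 m)) := by
    intro p; simp [Function.update_idem]
  have h := Fintype.sum_bijective _ hinv.bijective
      (fun p : (α → β) × β => F (Function.update p.1 m p.2))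
      (fun p : (α → β) × β => F p.1) (fun p => rfl)
  calc ∑ x : α → β, ∑ a : β, F (Function.update x m a)
      = ∑ p : (α → β) × β, F (Function.update p.1 m p.2) := by
        rw [Fintype.sum_prod_type]
    _ = ∑ p : (α → β) × β, F p.1 := h
    _ = (Fintype.card β : ℝ) * ∑ x, F x := by
        rw [Fintype.sum_prod_type]
        simp [Finset.sum_const, mul_comm, Finset.mul_sum]

lemma prod_if_succ {n m : ℕ} (hm : m < n) (g : Fin n → ℝ) :
    ∏ i : Fin n, (if i.val < m + 1 then g i else 1)
      = (∏ i : Fin n, (if i.val < m then g i else 1)) * g ⟨m, hm⟩ := by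
  set μ : Fin n := ⟨m, hm⟩
  rw [← Finset.prod_erase_mul Finset.univ _ (Finset.mem_univ μ),
      ← Finset.prod_erase_mul Finset.univ
        (fun i : Fin n => if i.val < m then g i else 1) (Finset.mem_univ μ)]
  have h1 : ∀ i ∈ Finset.univ.erase μ,
      (if i.val < m + 1 then g i else 1) = (if i.val < m then g i else 1) := by
    intro i hi
    have hne : i.val ≠ m := fun h => (Finset.mem_erase.1 hi).1 (Fin.ext h)
    by_cases h : i.val < m
    · simp [h, Nat.lt_succ_of_lt h]
    · have h2 : ¬ i.val < m + 1 := by omega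
      simp [h, h2]
  rw [Finset.prod_congr rfl h1]
  simp [μ]

lemma key_lemma {X Y : Type*} [Fintype X] [Fintype Y] [DecidableEq X] [DecidableEq Y]
    [Nonempty X] [Nonempty Y] {n : ℕ}
    (K : Fin n → (Fin n → X) → (Fin n → Y) → ℝ)
    (hc : ∀ (i m : Fin n), i < m → ∀ x a y b,
      K i (Function.update x m a) (Function.update y m b) = K i x y)
    (hs : ∀ (m : Fin n) (x : Fin n → X) (y : Fin n → Y),
      ∑ a : X, ∑ b : Y, K m (Function.update x m a) (Function.update y m b) = 1) :
    ∑ x, ∑ y, ∏ i, K i x y = 1 := by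
  classical
  have cXpos : (0:ℝ) < Fintype.card X := by positivity
  have cYpos : (0:ℝ) < Fintype.card Y := by positivity
  have main : ∀ m, m ≤ n →
      ∑ x, ∑ y, ∏ i : Fin n, (if i.val < m then K i x y else 1)
        = ((Fintype.card X : ℝ) * Fintype.card Y) ^ (n - m) := by
    intro m
    induction m with
    | zero =>
      intro _
      have : ∀ (x : Fin n → X) (y : Fin n → Y),
          ∏ i : Fin n, (if i.val < 0 then K i x y else 1) = 1 := by
        intro x y; simp
      rw [Finset.sum_congr rfl fun x _ => Finset.sum_congr rfl fun y _ => this x y]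
      simp only [Finset.sum_const, Finset.card_univ, nsmul_eq_mul, mul_one, Nat.sub_zero]
      rw [Fintype.card_fun, Fintype.card_fun, Fintype.card_fin]
      push_cast
      rw [mul_pow]
    | succ m ih =>
      intro hm1
      have hm : m < n := hm1
      have IH := ih hm.le
      set μ : Fin n := ⟨m, hm⟩ with hμ
      set g : (Fin n → X) → (Fin n → Y) → ℝ :=
        fun x y => ∏ i : Fin n, (if i.val < m then K i x y else 1) with hg
      set T := ∑ x, ∑ y, ∏ i : Fin n, (if i.val < m + 1 then K i x y else 1) with hT
      have hsplit : T = ∑ x, ∑ y, g x y * K μ x y := by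
        rw [hT]
        exact Finset.sum_congr rfl fun x _ => Finset.sum_congr rfl fun y _ =>
          prod_if_succ hm _
      have hgc : ∀ (x : Fin n → X) (a : X) (y : Fin n → Y) (b : Y),
          g (Function.update x μ a) (Function.update y μ b) = g x y := by
        intro x a y b
        refine Finset.prod_congr rfl fun i _ => ?_
        by_cases h : i.val < m
        · simp only [h, if_true]
          exact hc i μ (by simpa [Fin.lt_def, hμ] using h) x a y b
        · simp [h]
      have hx : ∀ x : Fin n → X,
          (Fintype.card Y : ℝ) * ∑ a : X, ∑ y, g (Function.update x μ a) y
              * K μ (Function.update x μ a) y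
          = ∑ y, g x y := by
        intro x
        rw [Finset.mul_sum]
        calc ∑ a : X, (Fintype.card Y : ℝ) * ∑ y, g (Function.update x μ a) y
                * K μ (Function.update x μ a) y
            = ∑ a : X, ∑ y, ∑ b : Y, g (Function.update x μ a) (Function.update y μ b)
                * K μ (Function.update x μ a) (Function.update y μ b) := by
              refine Finset.sum_congr rfl fun a _ => ?_
              rw [← sum_update_eq (fun y => g (Function.update x μ a) y
                * K μ (Function.update x μ a) y) μ]
          _ = ∑ a : X, ∑ y, g x y * ∑ b : Y,
                K μ (Function.update x μ a) (Function.update y μ b) := by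
              refine Finset.sum_congr rfl fun a _ => Finset.sum_congr rfl fun y _ => ?_
              rw [Finset.mul_sum]
              exact Finset.sum_congr rfl fun b _ => by rw [hgc]
          _ = ∑ y, g x y * ∑ a : X, ∑ b : Y,
                K μ (Function.update x μ a) (Function.update y μ b) := by
              rw [Finset.sum_comm]
              exact Finset.sum_congr rfl fun y _ => (Finset.mul_sum ..).symm
          _ = ∑ y, g x y := by
              refine Finset.sum_congr rfl fun y _ => ?_
              rw [hs μ x y, mul_one]
      have step : (Fintype.card Y : ℝ) * ((Fintype.card X : ℝ) * T)
          = ((Fintype.card X : ℝ) * Fintype.card Y) ^ (n - m) := by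
        rw [hsplit, ← sum_update_eq (fun x => ∑ y, g x y * K μ x y) μ, Finset.mul_sum]
        rw [Finset.sum_congr rfl fun x _ => hx x]
        exact IH
      have hpow : ((Fintype.card X : ℝ) * Fintype.card Y) ^ (n - m)
          = (Fintype.card Y : ℝ) * ((Fintype.card X : ℝ)
            * ((Fintype.card X : ℝ) * Fintype.card Y) ^ (n - (m+1))) := by
        have : n - m = (n - (m+1)) + 1 := by omega
        rw [this, pow_succ]
        ring
      rw [hpow] at step
      have h1 := mul_left_cancel₀ (ne_of_gt cYpos) step
      exact mul_left_cancel₀ (ne_of_gt cXpos) h1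
  have := main n le_rfl
  simp only [Nat.sub_self, pow_zero] at this
  rw [← this]
  exact Finset.sum_congr rfl fun x _ => Finset.sum_congr rfl fun y _ =>
    Finset.prod_congr rfl fun i _ => by simp [i.isLt]

/-- Jarzynski-type equality for horse races with memory effects and side information:
`⟨exp[n·g_n + s_{y^n} - i_{x^n→y^n} - ln o(y^n)]⟩ = 1`. Here `f i x y` is the
fraction `f_i(y_i | y^{i-1}, x^i)` bet on horse `y i` in race `i` (depending only on
`x^i` and `y^i`, summing to 1 over the horse), and `o i y` is the odds
`o_i(y_i | y^{i-1})` (depending only on `y^i`). -/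
theorem stmt17 {X Y : Type*} [Fintype X] [Fintype Y] [DecidableEq X] [DecidableEq Y]
    (n : ℕ) (hn : 0 < n)
    (P : (Fin n → X) → (Fin n → Y) → ℝ)
    (hP : ∀ x y, 0 < P x y) (hPsum : ∑ x, ∑ y, P x y = 1)
    (f : Fin n → (Fin n → X) → (Fin n → Y) → ℝ)
    (hfpos : ∀ i x y, 0 < f i x y)
    (hfcausal : ∀ (i : Fin n) (x x' : Fin n → X) (y y' : Fin n → Y),
      (∀ j, j ≤ i → x j = x' j) → (∀ j, j ≤ i → y j = y' j) → f i x y = f i x' y')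
    (hfsum : ∀ (i : Fin n) (x : Fin n → X) (y : Fin n → Y),
      ∑ h : Y, f i x (Function.update y i h) = 1)
    (o : Fin n → (Fin n → Y) → ℝ)
    (hopos : ∀ i y, 0 < o i y)
    (hocausal : ∀ (i : Fin n) (y y' : Fin n → Y),
      (∀ j, j ≤ i → y j = y' j) → o i y = o i y') :
    ∑ x, ∑ y, P x y * Real.exp
        ((n : ℝ) * ((1 / (n : ℝ)) * ∑ i, Real.log (f i x y * o i y))
          - Real.log (∑ x', P x' y)
          - Real.log ((∏ i, condY n P i x y) / (∑ x', P x' y))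
          - Real.log (∏ i, o i y)) = 1 := by
  classical
  haveI : Nonempty (Fin n) := ⟨⟨0, hn⟩⟩
  haveI hX : Nonempty X := by
    by_contra h
    rw [not_nonempty_iff] at h
    simp [Finset.univ_eq_empty] at hPsum
  haveI hY : Nonempty Y := by
    by_contra h
    rw [not_nonempty_iff] at h
    simp [Finset.univ_eq_empty] at hPsum
  -- the causal kernel
  set K : Fin n → (Fin n → X) → (Fin n → Y) → ℝ :=
    fun i x y => Bmar n P i x y / Amar n P i.val x y * f i x y with hK
  have hc : ∀ (i m : Fin n), i < m → ∀ x a y b,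
      K i (Function.update x m a) (Function.update y m b) = K i x y := by
    intro i m him x a y b
    rw [hK]
    simp only
    rw [Bmar_update P him, Amar_update P (le_of_lt him) ,
      hfcausal i (Function.update x m a) x (Function.update y m b) y
        (fun j hj => Function.update_of_ne (ne_of_lt (lt_of_le_of_lt hj him)) a x)
        (fun j hj => Function.update_of_ne (ne_of_lt (lt_of_le_of_lt hj him)) b y)]
  have hs : ∀ (m : Fin n) (x : Fin n → X) (y : Fin n → Y),
      ∑ a : X, ∑ b : Y, K m (Function.update x m a) (Function.update y m b) = 1 := by
    intro m x y
    have hA : Amar n P m.val x y ≠ 0 := (Amar_pos P hP m.val x y).ne'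
    have h1 : ∀ a : X, ∑ b : Y, K m (Function.update x m a) (Function.update y m b)
        = Bmar n P m (Function.update x m a) y / Amar n P m.val x y := by
      intro a
      have h2 : ∀ b : Y, K m (Function.update x m a) (Function.update y m b)
          = Bmar n P m (Function.update x m a) y / Amar n P m.val x y
            * f m (Function.update x m a) (Function.update y m b) := by
        intro b
        rw [hK]
        simp only
        rw [Bmar_update_y, Amar_update P le_rfl]
      rw [Finset.sum_congr rfl fun b _ => h2 b, ← Finset.mul_sum,
        hfsum m (Function.update x m a) y, mul_one]
    rw [Finset.sum_congr rfl fun a _ => h1 a, ← Finset.sum_div, sum_Bmar P m x y,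
      div_self hA]
  have hkey := key_lemma K hc hs
  have hpt : ∀ (x : Fin n → X) (y : Fin n → Y), P x y * Real.exp
        ((n : ℝ) * ((1 / (n : ℝ)) * ∑ i, Real.log (f i x y * o i y))
          - Real.log (∑ x', P x' y)
          - Real.log ((∏ i, condY n P i x y) / (∑ x', P x' y))
          - Real.log (∏ i, o i y)) = ∏ i, K i x y := by
    intro x y
    have hnne : (n : ℝ) ≠ 0 := Nat.cast_ne_zero.2 hn.ne'
    set F := ∏ i, f i x y with hF
    set O := ∏ i, o i y with hO
    set Py := ∑ x', P x' y with hPy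
    set CY := ∏ i, condY n P i x y with hCY
    have hFpos : 0 < F := Finset.prod_pos fun i _ => hfpos i x y
    have hOpos : 0 < O := Finset.prod_pos fun i _ => hopos i y
    have hPypos : 0 < Py := Finset.sum_pos (fun x' _ => hP x' y) Finset.univ_nonempty
    have hCYpos : 0 < CY := by
      rw [hCY]
      exact Finset.prod_pos fun i _ => by
        rw [condY_eq]
        exact div_pos (Amar_pos P hP _ x y) (Bmar_pos P hP i x y)
    -- simplify the exponent
    have hexp : (n : ℝ) * ((1 / (n : ℝ)) * ∑ i, Real.log (f i x y * o i y))
            - Real.log Py - Real.log (CY / Py) - Real.log O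
        = Real.log (F / CY) := by
      have e1 : (n : ℝ) * ((1 / (n : ℝ)) * ∑ i, Real.log (f i x y * o i y))
          = ∑ i, Real.log (f i x y * o i y) := by
        field_simp
      have e2 : ∑ i, Real.log (f i x y * o i y) = Real.log F + Real.log O := by
        rw [Finset.sum_congr rfl fun i _ =>
          Real.log_mul (hfpos i x y).ne' (hopos i y).ne', Finset.sum_add_distrib,
          hF, hO, Real.log_prod fun i _ => (hfpos i x y).ne',
          Real.log_prod fun i _ => (hopos i y).ne']
      rw [e1, e2, Real.log_div hCYpos.ne' hPypos.ne', Real.log_div hFpos.ne' hCYpos.ne']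
      ring
    rw [hexp, Real.exp_log (div_pos hFpos hCYpos)]
    -- product identities
    set Ap := ∏ i : Fin n, Amar n P i.val x y with hAp
    set Np := ∏ i : Fin n, Amar n P (i.val + 1) x y with hNp
    set Bp := ∏ i : Fin n, Bmar n P i x y with hBp
    have hAppos : 0 < Ap := Finset.prod_pos fun i _ => Amar_pos P hP _ x y
    have hBppos : 0 < Bp := Finset.prod_pos fun i _ => Bmar_pos P hP i x y
    have hCYeq : CY = Np / Bp := by
      rw [hCY, Finset.prod_congr rfl fun i _ => condY_eq P i x y,
        Finset.prod_div_distrib]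
    have hKprod : ∏ i, K i x y = Bp / Ap * F := by
      rw [hK]
      simp only
      rw [Finset.prod_mul_distrib, Finset.prod_div_distrib]
    have htel : Np = Ap * P x y := by
      have h0 : Amar n P 0 x y = 1 := by rw [Amar_zero]; exact hPsum
      have hn' : Amar n P n x y = P x y := Amar_top P x y
      have g : ∀ k : ℕ, ℝ := fun k => Amar n P k x y
      have e1 : Np = ∏ k ∈ Finset.range n, Amar n P (k + 1) x y := by
        rw [hNp]
        exact Fin.prod_univ_eq_prod_range (fun k => Amar n P (k + 1) x y) n
      have e2 : Ap = ∏ k ∈ Finset.range n, Amar n P k x y := by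
        rw [hAp]
        exact Fin.prod_univ_eq_prod_range (fun k => Amar n P k x y) n
      have e3 : (∏ k ∈ Finset.range n, Amar n P (k + 1) x y) * Amar n P 0 x y
          = (∏ k ∈ Finset.range n, Amar n P k x y) * Amar n P n x y := by
        exact (Finset.prod_range_succ' (fun k => Amar n P k x y) n).symm.trans
          (Finset.prod_range_succ (fun k => Amar n P k x y) n)
      rw [e1, e2, ← mul_one (∏ k ∈ Finset.range n, Amar n P (k + 1) x y), ← h0, e3, hn']
    rw [hKprod, hCYeq, htel]
    have hPxy := hP x y
    field_simp

  rw [Finset.sum_congr rfl fun x _ => Finset.sum_congr rfl fun y _ => hpt x y]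
  exact hkey
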